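/- arXiv:2310.15921 — 3 statements merged into one kernel-verified Lean document; each statement's English description precedes it below -/
import Mathlib

section
/- Let E be a real inner product space, let n, m ≥ 1, let w : Fin n → E and w′ : Fin m → E, and define the mean-pooled sentence embeddings s = (1/n)·Σᵢ wᵢ and s′ = (1/m)·Σⱼ w′ⱼ. Then σ(⟪s, s′⟫) ≥ ∏_{i,j} σ(⟪wᵢ, w′ⱼ⟫)^{1/(n·m)}, where σ is the logistic sigmoid function. -/
open RealInnerProductSpace

noncomputable def sigmoid (x : ℝ) : ℝ := 1 / (1 + Real.exp (-x))

lemma softplus_convex : ConvexOn ℝ Set.univ (fun x : ℝ => Real.log (1 + Real.exp x)) := by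
  have hpos : ∀ x : ℝ, (0:ℝ) < 1 + Real.exp x := fun x => by positivity
  have hderiv : ∀ x : ℝ, HasDerivAt (fun x : ℝ => Real.log (1 + Real.exp x))
      (Real.exp x / (1 + Real.exp x)) x := by
    intro x
    exact ((Real.hasDerivAt_exp x).const_add 1).log (ne_of_gt (hpos x))
  apply MonotoneOn.convexOn_of_deriv convex_univ
  · exact (continuous_const.add Real.continuous_exp).continuousOn.log
      (fun x _ => ne_of_gt (hpos x))
  · intro x _
    exact (hderiv x).differentiableAt.differentiableWithinAt
  · intro a _ b _ hab
    rw [(hderiv a).deriv, (hderiv b).deriv,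
      div_le_div_iff₀ (hpos a) (hpos b)]
    have := Real.exp_le_exp.2 hab
    nlinarith [Real.exp_pos a, Real.exp_pos b]

lemma sigmoid_pos (x : ℝ) : 0 < sigmoid x := by
  unfold sigmoid; positivity

lemma sigmoid_eq_exp (x : ℝ) : sigmoid x = Real.exp (-(Real.log (1 + Real.exp (-x)))) := by
  rw [Real.exp_neg, Real.exp_log (by positivity), sigmoid, one_div]

/-- Lower bound for the positive-pair probability under mean pooling:
if `s = (1/n)·Σᵢ wᵢ` and `s′ = (1/m)·Σⱼ w′ⱼ`, then
`σ(⟪s, s′⟫) ≥ ∏_{i,j} σ(⟪wᵢ, w′ⱼ⟫)^{1/(n·m)}`. -/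
theorem sigmoid_inner_mean_pool_ge
    {E : Type*} [NormedAddCommGroup E] [InnerProductSpace ℝ E]
    (n m : ℕ) (hn : 1 ≤ n) (hm : 1 ≤ m)
    (w : Fin n → E) (w' : Fin m → E)
    (s s' : E)
    (hs : s = (1 / (n : ℝ)) • ∑ i, w i)
    (hs' : s' = (1 / (m : ℝ)) • ∑ j, w' j) :
    sigmoid ⟪s, s'⟫ ≥
      ∏ i, ∏ j, sigmoid ⟪w i, w' j⟫ ^ (1 / ((n : ℝ) * (m : ℝ))) := by
  have hn' : (0:ℝ) < n := by exact_mod_cast hn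
  have hm' : (0:ℝ) < m := by exact_mod_cast hm
  set c : ℝ := 1 / ((n:ℝ) * (m:ℝ)) with hc
  have hcpos : 0 < c := by positivity
  set x : Fin n × Fin m → ℝ := fun p => ⟪w p.1, w' p.2⟫ with hx
  -- inner product of means is mean of inner products
  have hX : ⟪s, s'⟫ = ∑ p : Fin n × Fin m, c • (x p) := by
    rw [hs, hs', real_inner_smul_left, real_inner_smul_right, sum_inner]
    simp only [inner_sum, Finset.mul_sum, Fintype.sum_prod_type, smul_eq_mul, hx]
    congr 1; ext i; congr 1; ext j
    rw [hc]; field_simp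
  have hwsum : ∑ _p : Fin n × Fin m, c = 1 := by
    simp only [Finset.sum_const, Finset.card_univ, Fintype.card_prod, Fintype.card_fin,
      nsmul_eq_mul, hc]
    field_simp
    exact Nat.cast_mul n m
  -- Jensen's inequality for the convex softplus
  have hjensen : Real.log (1 + Real.exp (-⟪s, s'⟫)) ≤
      ∑ p : Fin n × Fin m, c * Real.log (1 + Real.exp (-(x p))) := by
    have h := softplus_convex.map_sum_le (t := Finset.univ) (w := fun _ => c)
      (p := fun p => -(x p)) (fun _ _ => hcpos.le) hwsum (fun _ _ => Set.mem_univ _)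
    simp only [smul_eq_mul] at h
    have hsum : ∑ p : Fin n × Fin m, c * (-(x p)) = -⟪s, s'⟫ := by
      rw [hX]; simp [Finset.sum_neg_distrib, mul_neg]
    rwa [hsum] at h
  -- rewrite both sides via exp
  calc sigmoid ⟪s, s'⟫ = Real.exp (-(Real.log (1 + Real.exp (-⟪s, s'⟫)))) :=
        sigmoid_eq_exp _
    _ ≥ Real.exp (∑ p : Fin n × Fin m, c * (-(Real.log (1 + Real.exp (-(x p)))))) := by
        apply Real.exp_le_exp.2
        have h2 : ∑ p : Fin n × Fin m, c * (-(Real.log (1 + Real.exp (-(x p))))) =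
            -(∑ p : Fin n × Fin m, c * Real.log (1 + Real.exp (-(x p)))) := by
          simp [mul_neg]
        rw [h2]
        exact neg_le_neg hjensen
    _ = ∏ p : Fin n × Fin m, Real.exp (c * (-(Real.log (1 + Real.exp (-(x p)))))) := by
        rw [Real.exp_sum]
    _ = ∏ i, ∏ j, sigmoid ⟪w i, w' j⟫ ^ c := by
        rw [Fintype.prod_prod_type]
        congr 1; ext i; congr 1; ext j
        rw [Real.rpow_def_of_pos (sigmoid_pos _), sigmoid_eq_exp ⟪w i, w' j⟫,
          Real.log_exp]
        ring_nf
        rfl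
end

section
/- Let E be a real inner product space, let n, m ≥ 1, let w : Fin n → E and w′ : Fin m → E, and define the mean-pooled sentence embeddings s = (1/n)·Σᵢ wᵢ and s′ = (1/m)·Σⱼ w′ⱼ. Then 1 − σ(⟪s, s′⟫) ≥ ∏_{i,j} (1 − σ(⟪wᵢ, w′ⱼ⟫))^{1/(n·m)}, where σ is the logistic sigmoid function. -/
open RealInnerProductSpace

lemma one_sub_sigmoid_eq (x : ℝ) : 1 - sigmoid x = 1 / (1 + Real.exp x) := by
  have h1 : (0:ℝ) < 1 + Real.exp (-x) := by positivity
  have h2 : (0:ℝ) < 1 + Real.exp x := by positivity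
  field_simp [sigmoid]
  rw [sigmoid, Real.exp_neg]
  field_simp
  ring

lemma key_jensen {ι : Type*} (s : Finset ι) (w x : ι → ℝ)
    (hw : ∀ i ∈ s, 0 ≤ w i) (hw' : ∑ i ∈ s, w i = 1) :
    ∏ i ∈ s, (1 / (1 + Real.exp (x i))) ^ (w i) ≤
      1 / (1 + Real.exp (∑ i ∈ s, w i * x i)) := by
  set a : ι → ℝ := fun i => 1 + Real.exp (x i) with ha_def
  have ha : ∀ i, 0 < a i := fun i => by positivity
  set P : ℝ := ∏ i ∈ s, a i ^ (w i) with hP_def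
  have hP : 0 < P := Finset.prod_pos fun i _ => Real.rpow_pos_of_pos (ha i) _
  set Ex : ℝ := Real.exp (∑ i ∈ s, w i * x i) with hE_def
  have hE : 0 < Ex := Real.exp_pos _
  have hEprod : Ex = ∏ i ∈ s, (Real.exp (x i)) ^ (w i) := by
    rw [hE_def, Real.exp_sum]
    exact Finset.prod_congr rfl fun i _ => by rw [mul_comm, Real.exp_mul]
  have h1 : ∏ i ∈ s, ((a i)⁻¹) ^ (w i) ≤ ∑ i ∈ s, w i * (a i)⁻¹ :=
    Real.geom_mean_le_arith_mean_weighted s w _ hw hw'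
      (fun i _ => inv_nonneg.2 (ha i).le)
  have h2 : ∏ i ∈ s, (Real.exp (x i) * (a i)⁻¹) ^ (w i) ≤
      ∑ i ∈ s, w i * (Real.exp (x i) * (a i)⁻¹) :=
    Real.geom_mean_le_arith_mean_weighted s w _ hw hw'
      (fun i _ => by positivity)
  have hsum : (∑ i ∈ s, w i * (a i)⁻¹) + (∑ i ∈ s, w i * (Real.exp (x i) * (a i)⁻¹)) = 1 := by
    rw [← Finset.sum_add_distrib, ← hw']
    refine Finset.sum_congr rfl fun i hi => ?_
    have hai : (1:ℝ) + Real.exp (x i) = a i := rfl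
    have : (a i)⁻¹ + Real.exp (x i) * (a i)⁻¹ = (1 + Real.exp (x i)) * (a i)⁻¹ := by ring
    rw [← mul_add, this, hai, mul_inv_cancel₀ (ha i).ne', mul_one]
  have hprod1 : ∏ i ∈ s, ((a i)⁻¹) ^ (w i) = P⁻¹ := by
    rw [hP_def, ← Finset.prod_inv_distrib]
    exact Finset.prod_congr rfl fun i _ => Real.inv_rpow (ha i).le _
  have hprod2 : ∏ i ∈ s, (Real.exp (x i) * (a i)⁻¹) ^ (w i) = Ex * P⁻¹ := by
    rw [hEprod, hP_def, ← Finset.prod_inv_distrib, ← Finset.prod_mul_distrib]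
    exact Finset.prod_congr rfl fun i _ => by
      rw [Real.mul_rpow (Real.exp_pos _).le (inv_nonneg.2 (ha i).le),
        Real.inv_rpow (ha i).le]
  have hmain : P⁻¹ * (1 + Ex) ≤ 1 := by
    have := add_le_add h1 h2
    rw [hprod1, hprod2, hsum] at this
    linarith
  have hgoal : P⁻¹ ≤ 1 / (1 + Ex) := by
    rw [le_div_iff₀ (by positivity)]
    linarith [hmain]
  calc ∏ i ∈ s, (1 / (1 + Real.exp (x i))) ^ (w i)
      = P⁻¹ := by simp_rw [one_div]; exact hprod1
    _ ≤ 1 / (1 + Ex) := hgoal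

/-- Lower bound for the negative-pair probability under mean pooling:
if `s = (1/n)·Σᵢ wᵢ` and `s′ = (1/m)·Σⱼ w′ⱼ`, then
`1 − σ(⟪s, s′⟫) ≥ ∏_{i,j} (1 − σ(⟪wᵢ, w′ⱼ⟫))^{1/(n·m)}`. -/
theorem one_sub_sigmoid_inner_mean_pool_ge
    {E : Type*} [NormedAddCommGroup E] [InnerProductSpace ℝ E]
    (n m : ℕ) (hn : 1 ≤ n) (hm : 1 ≤ m)
    (w : Fin n → E) (w' : Fin m → E)
    (s s' : E)
    (hs : s = (1 / (n : ℝ)) • ∑ i, w i)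
    (hs' : s' = (1 / (m : ℝ)) • ∑ j, w' j) :
    1 - sigmoid ⟪s, s'⟫ ≥
      ∏ i, ∏ j, (1 - sigmoid ⟪w i, w' j⟫) ^ (1 / ((n : ℝ) * (m : ℝ))) := by
  have hn' : (0:ℝ) < n := by exact_mod_cast hn
  have hm' : (0:ℝ) < m := by exact_mod_cast hm
  have hinner : ⟪s, s'⟫ = ∑ p : Fin n × Fin m, (1 / ((n : ℝ) * (m : ℝ))) * ⟪w p.1, w' p.2⟫ := by
    rw [hs, hs', real_inner_smul_left, real_inner_smul_right, sum_inner]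
    simp_rw [inner_sum]
    rw [← Finset.sum_product', Finset.mul_sum, Finset.mul_sum]
    refine Finset.sum_congr rfl fun p _ => ?_
    field_simp
  have key := key_jensen (Finset.univ : Finset (Fin n × Fin m))
    (fun _ => 1 / ((n : ℝ) * (m : ℝ))) (fun p => ⟪w p.1, w' p.2⟫)
    (fun i _ => by positivity)
    (by
      simp only [Finset.sum_const, Finset.card_univ, Fintype.card_prod, Fintype.card_fin,
        nsmul_eq_mul]
      push_cast
      field_simp
      try ring)
  rw [ge_iff_le, one_sub_sigmoid_eq, hinner]
  simp_rw [one_sub_sigmoid_eq]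
  rw [← Finset.prod_product']
  exact key
end

section
/- Let E be a real inner product space and n ≥ 1 a fixed sentence length. Let K and L be finite index sets of positive and negative sentence pairs respectively; for each k ∈ K let w_k, w′_k : Fin n → E with mean-pooled embeddings s_k = (1/n)·Σᵢ w_{k,i} and s′_k = (1/n)·Σⱼ w′_{k,j}, and similarly for each l ∈ L. Then ∏_{k∈K} σ(⟪s_k, s′_k⟫) · ∏_{l∈L} (1 − σ(⟪s_l, s′_l⟫)) ≥ ( ∏_{k∈K} ∏_{i,j} σ(⟪w_{k,i}, w′_{k,j}⟫) · ∏_{l∈L} ∏_{i,j} (1 − σ(⟪w_{l,i}, w′_{l,j}⟫)) )^{1/n²}, where σ is the logistic sigmoid function. -/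
open RealInnerProductSpace

lemma one_sub_sigmoid (x : ℝ) : 1 - sigmoid x = sigmoid (-x) := by
  unfold sigmoid
  have h1 : (0:ℝ) < 1 + Real.exp (-x) := by positivity
  have h2 : (0:ℝ) < 1 + Real.exp (-(-x)) := by positivity
  have hx := Real.exp_neg x
  have hmul : Real.exp (-x) * Real.exp x = 1 := by
    rw [← Real.exp_add]; simp
  field_simp
  nlinarith [Real.exp_pos x, Real.exp_pos (-x)]

/-- Mahler's inequality for weighted geometric means. -/
lemma mahler_ineq {ι : Type*} [Fintype ι] (z w : ι → ℝ) (hz : ∀ i, 0 < z i)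
    (hw : ∀ i, 0 ≤ w i) (hw1 : ∑ i, w i = 1) :
    1 + ∏ i, z i ^ w i ≤ ∏ i, (1 + z i) ^ w i := by
  have hz1 : ∀ i, (0:ℝ) < 1 + z i := fun i => by have := hz i; linarith
  have h1 : ∏ i, (z i / (1 + z i)) ^ w i ≤ ∑ i, w i * (z i / (1 + z i)) :=
    Real.geom_mean_le_arith_mean_weighted _ _ _ (fun i _ => hw i) hw1
      (fun i _ => by have := hz i; have := hz1 i; positivity)
  have h2 : ∏ i, (1 / (1 + z i)) ^ w i ≤ ∑ i, w i * (1 / (1 + z i)) :=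
    Real.geom_mean_le_arith_mean_weighted _ _ _ (fun i _ => hw i) hw1
      (fun i _ => by have := hz1 i; positivity)
  have hsum : ∑ i, w i * (z i / (1 + z i)) + ∑ i, w i * (1 / (1 + z i)) = 1 := by
    rw [← Finset.sum_add_distrib]
    calc ∑ i, (w i * (z i / (1 + z i)) + w i * (1 / (1 + z i)))
        = ∑ i, w i := by
          refine Finset.sum_congr rfl fun i _ => ?_
          have hone : z i / (1 + z i) + 1 / (1 + z i) = 1 := by
            have := hz1 i; field_simp; ring
          calc w i * (z i / (1 + z i)) + w i * (1 / (1 + z i))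
              = w i * (z i / (1 + z i) + 1 / (1 + z i)) := by ring
            _ = w i := by rw [hone, mul_one]
      _ = 1 := hw1
  set P : ℝ := ∏ i, (1 + z i) ^ w i with hP
  have hPpos : 0 < P := Finset.prod_pos fun i _ => Real.rpow_pos_of_pos (hz1 i) _
  have e1 : ∏ i, (z i / (1 + z i)) ^ w i = (∏ i, z i ^ w i) / P := by
    rw [hP]
    calc ∏ i, (z i / (1 + z i)) ^ w i
        = ∏ i, (z i ^ w i / (1 + z i) ^ w i) :=
          Finset.prod_congr rfl fun i _ => Real.div_rpow (hz i).le (hz1 i).le _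
      _ = (∏ i, z i ^ w i) / ∏ i, (1 + z i) ^ w i := Finset.prod_div_distrib _ _
  have e2 : ∏ i, (1 / (1 + z i)) ^ w i = 1 / P := by
    rw [hP]
    calc ∏ i, (1 / (1 + z i)) ^ w i
        = ∏ i, ((1:ℝ) ^ w i / (1 + z i) ^ w i) :=
          Finset.prod_congr rfl fun i _ => Real.div_rpow zero_le_one (hz1 i).le _
      _ = (∏ i, (1:ℝ) ^ w i) / ∏ i, (1 + z i) ^ w i := Finset.prod_div_distrib _ _
      _ = 1 / ∏ i, (1 + z i) ^ w i := by
          rw [show ∏ i, (1:ℝ) ^ w i = 1 from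
            Finset.prod_eq_one fun i _ => Real.one_rpow _]
  rw [e1] at h1; rw [e2] at h2
  have h3 : (∏ i, z i ^ w i) / P + 1 / P ≤ 1 := by linarith
  rw [← add_div, div_le_one hPpos] at h3
  linarith

/-- Geometric mean bound for sigmoid of an average. -/
lemma sigmoid_geom_mean {ι : Type*} [Fintype ι] (x : ι → ℝ) (c : ℝ)
    (hc : c = (Fintype.card ι : ℝ)) (hcpos : 0 < c) :
    (∏ i, sigmoid (x i)) ^ (1 / c) ≤ sigmoid ((1 / c) * ∑ i, x i) := by
  set z : ι → ℝ := fun i => Real.exp (-(x i)) with hzdef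
  have hz : ∀ i, 0 < z i := fun i => Real.exp_pos _
  have hz1 : ∀ i, (0:ℝ) < 1 + z i := fun i => by have := hz i; positivity
  have hw1 : ∑ _i : ι, (1 / c) = 1 := by
    rw [Finset.sum_const, Finset.card_univ, nsmul_eq_mul, ← hc]
    field_simp
  have hm := mahler_ineq z (fun _ => 1 / c) hz (fun _ => by positivity) hw1
  -- exp of the averaged argument equals the weighted geometric mean of z
  have hexp : Real.exp (-((1 / c) * ∑ i, x i)) = ∏ i, z i ^ (1 / c : ℝ) := by
    have harg : -((1 / c) * ∑ i, x i) = ∑ i, (1 / c) * (-(x i)) := by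
      rw [← Finset.mul_sum, Finset.sum_neg_distrib]; ring
    rw [harg, Real.exp_sum]
    refine Finset.prod_congr rfl fun i _ => ?_
    rw [hzdef]
    rw [Real.rpow_def_of_pos (Real.exp_pos _), Real.log_exp, mul_comm]
  -- LHS equals 1 / ∏ (1+z)^(1/c)
  have hlhs : (∏ i, sigmoid (x i)) ^ (1 / c : ℝ)
      = 1 / ∏ i, (1 + z i) ^ (1 / c : ℝ) := by
    rw [← Real.finset_prod_rpow _ _ (fun i _ => (sigmoid_pos (x i)).le)]
    calc ∏ i, sigmoid (x i) ^ (1 / c : ℝ)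
        = ∏ i, ((1:ℝ) ^ (1 / c : ℝ) / (1 + z i) ^ (1 / c : ℝ)) :=
          Finset.prod_congr rfl fun i _ => by
            rw [show sigmoid (x i) = 1 / (1 + z i) from rfl]
            exact Real.div_rpow zero_le_one (hz1 i).le _
      _ = (∏ i, (1:ℝ) ^ (1 / c : ℝ)) / ∏ i, (1 + z i) ^ (1 / c : ℝ) :=
          Finset.prod_div_distrib _ _
      _ = 1 / ∏ i, (1 + z i) ^ (1 / c : ℝ) := by
          rw [show ∏ _i : ι, (1:ℝ) ^ (1 / c : ℝ) = 1 from
            Finset.prod_eq_one fun i _ => Real.one_rpow _]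
  have hPpos : 0 < ∏ i, (1 + z i) ^ (1 / c : ℝ) :=
    Finset.prod_pos fun i _ => Real.rpow_pos_of_pos (hz1 i) _
  have hGpos : (0:ℝ) < 1 + ∏ i, z i ^ (1 / c : ℝ) := by
    have : 0 < ∏ i, z i ^ (1 / c : ℝ) :=
      Finset.prod_pos fun i _ => Real.rpow_pos_of_pos (hz i) _
    linarith
  rw [hlhs]
  unfold sigmoid
  rw [hexp]
  exact div_le_div_of_nonneg_left zero_le_one hGpos hm

/-- Lower bound on the contrastive likelihood (Equations 10–12): with all
sentences of length `n`, positive pairs indexed by `K` and negative pairs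
indexed by `L`, and mean-pooled sentence embeddings,
`∏_K σ(⟪s_k, s′_k⟫) · ∏_L (1 − σ(⟪s_l, s′_l⟫))`
`≥ (∏_K ∏_{i,j} σ(⟪w_{k,i}, w′_{k,j}⟫) · ∏_L ∏_{i,j} (1 − σ(⟪w_{l,i}, w′_{l,j}⟫)))^{1/n²}`. -/
theorem contrastive_likelihood_lower_bound
    {E : Type*} [NormedAddCommGroup E] [InnerProductSpace ℝ E]
    (n : ℕ) (hn : 1 ≤ n)
    {K L : Type*} [Fintype K] [Fintype L]
    (w w' : K → Fin n → E) (v v' : L → Fin n → E)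
    (s s' : K → E) (t t' : L → E)
    (hs : ∀ k, s k = (1 / (n : ℝ)) • ∑ i, w k i)
    (hs' : ∀ k, s' k = (1 / (n : ℝ)) • ∑ j, w' k j)
    (ht : ∀ l, t l = (1 / (n : ℝ)) • ∑ i, v l i)
    (ht' : ∀ l, t' l = (1 / (n : ℝ)) • ∑ j, v' l j) :
    (∏ k, sigmoid ⟪s k, s' k⟫) * (∏ l, (1 - sigmoid ⟪t l, t' l⟫)) ≥
      ((∏ k, ∏ i, ∏ j, sigmoid ⟪w k i, w' k j⟫) *
        (∏ l, ∏ i, ∏ j, (1 - sigmoid ⟪v l i, v' l j⟫))) ^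
          (1 / ((n : ℝ) ^ 2)) := by
  have hnpos : (0:ℝ) < (n:ℝ) := by exact_mod_cast hn
  have hc : ((n:ℝ)^2) = (Fintype.card (Fin n × Fin n) : ℝ) := by
    simp [Fintype.card_prod]; ring
  have hcpos : (0:ℝ) < (n:ℝ)^2 := by positivity
  -- inner product expansion
  have hinner : ∀ (a a' : Fin n → E),
      ⟪(1 / (n:ℝ)) • ∑ i, a i, (1 / (n:ℝ)) • ∑ j, a' j⟫
        = (1 / ((n:ℝ)^2)) * ∑ p : Fin n × Fin n, ⟪a p.1, a' p.2⟫ := by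
    intro a a'
    rw [real_inner_smul_left, real_inner_smul_right, sum_inner]
    rw [Fintype.sum_prod_type]
    simp only [inner_sum]
    ring
  -- per-k bound
  have hK : ∀ k, (∏ i, ∏ j, sigmoid ⟪w k i, w' k j⟫) ^ (1 / ((n:ℝ)^2))
      ≤ sigmoid ⟪s k, s' k⟫ := by
    intro k
    have hprod : (∏ i, ∏ j, sigmoid ⟪w k i, w' k j⟫)
        = ∏ p : Fin n × Fin n, sigmoid ⟪w k p.1, w' k p.2⟫ := by
      rw [Fintype.prod_prod_type]
    rw [hprod, hs, hs', hinner]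
    exact sigmoid_geom_mean _ _ hc hcpos
  have hL : ∀ l, (∏ i, ∏ j, (1 - sigmoid ⟪v l i, v' l j⟫)) ^ (1 / ((n:ℝ)^2))
      ≤ 1 - sigmoid ⟪t l, t' l⟫ := by
    intro l
    have hprod : (∏ i, ∏ j, (1 - sigmoid ⟪v l i, v' l j⟫))
        = ∏ p : Fin n × Fin n, sigmoid (-⟪v l p.1, v' l p.2⟫) := by
      rw [Fintype.prod_prod_type]
      exact Finset.prod_congr rfl fun i _ =>
        Finset.prod_congr rfl fun j _ => one_sub_sigmoid _
    rw [hprod, one_sub_sigmoid, ht, ht', hinner]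
    have hnegsum : -((1 / ((n:ℝ)^2)) * ∑ p : Fin n × Fin n, ⟪v l p.1, v' l p.2⟫)
        = (1 / ((n:ℝ)^2)) * ∑ p : Fin n × Fin n, (-⟪v l p.1, v' l p.2⟫) := by
      rw [Finset.sum_neg_distrib]; ring
    rw [hnegsum]
    exact sigmoid_geom_mean _ _ hc hcpos
  -- positivity facts
  have hApos : ∀ k, (0:ℝ) < ∏ i, ∏ j, sigmoid ⟪w k i, w' k j⟫ :=
    fun k => Finset.prod_pos fun i _ => Finset.prod_pos fun j _ => sigmoid_pos _
  have hBpos : ∀ l, (0:ℝ) < ∏ i, ∏ j, (1 - sigmoid ⟪v l i, v' l j⟫) := by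
    intro l
    refine Finset.prod_pos fun i _ => Finset.prod_pos fun j _ => ?_
    rw [one_sub_sigmoid]; exact sigmoid_pos _
  -- split the rpow over the products
  rw [ge_iff_le, Real.mul_rpow (Finset.prod_nonneg fun k _ => (hApos k).le)
    (Finset.prod_nonneg fun l _ => (hBpos l).le)]
  rw [← Real.finset_prod_rpow _ _ (fun k _ => (hApos k).le),
      ← Real.finset_prod_rpow _ _ (fun l _ => (hBpos l).le)]
  apply mul_le_mul
  · exact Finset.prod_le_prod
      (fun k _ => (Real.rpow_pos_of_pos (hApos k) _).le) (fun k _ => hK k)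
  · exact Finset.prod_le_prod
      (fun l _ => (Real.rpow_pos_of_pos (hBpos l) _).le) (fun l _ => hL l)
  · exact Finset.prod_nonneg fun l _ => (Real.rpow_pos_of_pos (hBpos l) _).le
  · exact Finset.prod_nonneg fun k _ => (sigmoid_pos _).le
end
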